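/- Let μ = {i_1 < i_2 < ... < i_g} be distinct positive integers, L ≥ 2Σ i_s, p_i = L - 2Σ_{j∈μ}min(i,j), and A_{i,j} = δ_{i,j}p_i + 2min(i,j). Then det A = L · p_{i_1} · p_{i_2} · ... · p_{i_{g-1}}. Consequently the quotient group ℤ^g / Aℤ^g has cardinality L·p_{i_1}···p_{i_{g-1}} (assuming all these factors are positive). -/

import Mathlib

open Matrix

lemma cardAux {n : ℕ} (A : Matrix (Fin n) (Fin n) ℤ) (hdet : A.det ≠ 0) :
    Nat.card ((Fin n → ℤ) ⧸ LinearMap.range A.mulVecLin) = A.det.natAbs := by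
  classical
  set N : Submodule ℤ (Fin n → ℤ) := LinearMap.range A.mulVecLin with hN
  have hinj : Function.Injective A.mulVecLin := by
    intro x y hxy
    have h : A.mulVec (x - y) = 0 := by
      rw [Matrix.mulVec_sub, show A.mulVec x = A.mulVec y from hxy, sub_self]
    by_contra hne
    exact hdet (Matrix.exists_mulVec_eq_zero_iff.mp
      ⟨x - y, sub_ne_zero.mpr hne, h⟩)
  let e₁ : (Fin n → ℤ) ≃ₗ[ℤ] N := LinearEquiv.ofInjective A.mulVecLin hinj
  obtain ⟨m, snf⟩ := N.smithNormalForm (Pi.basisFun ℤ (Fin n))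
  have hmn : m = n := by
    have h1 : Module.finrank ℤ N = m := Module.finrank_eq_card_basis snf.bN |>.trans (by simp)
    have h2 : Module.finrank ℤ N = n := by
      rw [← e₁.finrank_eq]; simp
    omega
  subst hmn
  have hindex : Nat.card ((Fin m → ℤ) ⧸ N) = ∏ i, (snf.a i).natAbs := by
    have := snf.toAddSubgroup_index_eq_pow_mul_prod
    rw [show Nat.card ((Fin m → ℤ) ⧸ N) = N.toAddSubgroup.index from rfl, this]
    simp [Ideal.span_singleton_toAddSubgroup_eq_zmultiples, Int.index_zmultiples]
  let σ : Fin m ≃ Fin m := Equiv.ofBijective snf.f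
    ((Finite.injective_iff_bijective).mp snf.f.injective)
  have hf : ∀ j, σ j = snf.f j := fun _ => rfl
  let e₂ : (Fin m → ℤ) ≃ₗ[ℤ] N := snf.bM.equiv snf.bN (Equiv.refl _)
  have hcomp : N.subtype ∘ₗ (e₁ : (Fin m → ℤ) →ₗ[ℤ] N) = A.mulVecLin := by
    exact LinearMap.ext fun x => rfl
  have hassoc : Associated (LinearMap.det (N.subtype ∘ₗ (e₁ : (Fin m → ℤ) →ₗ[ℤ] N)))
      (LinearMap.det (N.subtype ∘ₗ (e₂ : (Fin m → ℤ) →ₗ[ℤ] N))) :=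
    LinearMap.associated_det_comp_equiv _ _ _
  have hdetA : LinearMap.det (N.subtype ∘ₗ (e₁ : (Fin m → ℤ) →ₗ[ℤ] N)) = A.det := by
    rw [hcomp, ← Matrix.toLin'_apply']; exact LinearMap.det_toLin' A
  have hM : LinearMap.toMatrix snf.bM snf.bM (N.subtype ∘ₗ (e₂ : (Fin m → ℤ) →ₗ[ℤ] N))
      = (Matrix.diagonal snf.a).submatrix (σ.symm : Fin m → Fin m) id := by
    ext k j
    rw [LinearMap.toMatrix_apply]
    simp only [LinearMap.comp_apply, LinearEquiv.coe_coe, e₂, Module.Basis.equiv_apply,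
      Equiv.refl_apply, Submodule.coe_subtype, snf.snf j]
    rw [_root_.map_smul, Module.Basis.repr_self, Finsupp.smul_single, smul_eq_mul, mul_one,
      Finsupp.single_apply, Matrix.submatrix_apply, id, Matrix.diagonal_apply]
    have hiff : σ.symm k = j ↔ snf.f j = k := by
      rw [← hf, Equiv.symm_apply_eq, eq_comm]
    by_cases h : snf.f j = k
    · simp [h, hiff.mpr h]
    · simp [h, (not_iff_not.mpr hiff).mpr h]
  have hdet2 : (LinearMap.det (N.subtype ∘ₗ (e₂ : (Fin m → ℤ) →ₗ[ℤ] N))).natAbs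
      = ∏ i, (snf.a i).natAbs := by
    rw [← LinearMap.det_toMatrix snf.bM, hM, Matrix.det_permute σ.symm, Matrix.det_diagonal,
      Int.natAbs_mul]
    have hprod : (∏ i, snf.a i).natAbs = ∏ i, (snf.a i).natAbs :=
      map_prod Int.natAbsHom snf.a Finset.univ
    rcases Int.units_eq_one_or (Equiv.Perm.sign σ.symm) with h | h <;>
      rw [h] <;> simpa [Int.natAbs_neg] using hprod
  rw [hindex, ← hdet2, ← Int.natAbs_eq_iff_associated.mpr hassoc, hdetA]

theorem detPart (g : ℕ) (i : Fin (g + 1) → ℕ) (hmono : StrictMono i) (hpos : ∀ s, 0 < i s)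
    (L : ℕ) (hL : 2 * ∑ s, i s ≤ L)
    (p : Fin (g + 1) → ℤ)
    (hp : ∀ s, p s = (L : ℤ) - 2 * ∑ t, (min (i s) (i t) : ℤ))
    (A : Matrix (Fin (g + 1)) (Fin (g + 1)) ℤ)
    (hA : ∀ s t, A s t = (if s = t then p s else 0) + 2 * (min (i s) (i t) : ℤ)) :
    A.det = (L : ℤ) * ∏ s : Fin g, p s.castSucc := by
  classical
  set lst := Fin.last g with hlst
  set E : Matrix (Fin (g+1)) (Fin (g+1)) ℤ :=
    Matrix.of fun s t => if s = t then 1 else if s = lst then -1 else 0 with hE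
  set F : Matrix (Fin (g+1)) (Fin (g+1)) ℤ :=
    Matrix.of fun s t => if s = t then 1 else if s = lst then 1 else 0 with hF
  have hEtri : E.BlockTriangular OrderDual.toDual := by
    intro s t h
    have hst : s < t := h
    have hsl : s ≠ lst := by
      intro h'
      exact absurd hst (by rw [h']; exact not_lt.mpr (by simp [hlst, Fin.le_last]))
    simp [hE, hst.ne, hsl]
  have hFtri : F.BlockTriangular OrderDual.toDual := by
    intro s t h
    have hst : s < t := h
    have hsl : s ≠ lst := by
      intro h'
      exact absurd hst (by rw [h']; exact not_lt.mpr (by simp [hlst, Fin.le_last]))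
    simp [hF, hst.ne, hsl]
  have hdetE : E.det = 1 := by
    rw [Matrix.det_of_lowerTriangular E hEtri]
    simp [hE]
  have hdetF : F.det = 1 := by
    rw [Matrix.det_of_lowerTriangular F hFtri]
    simp [hF]
  -- min facts
  have hmin : ∀ s t : Fin (g+1), s ≤ t → (min (i s) (i t) : ℤ) = (i s : ℤ) := by
    intro s t hst
    have := min_eq_left (hmono.monotone hst)
    exact_mod_cast congrArg (Nat.cast : ℕ → ℤ) this
  -- column sums
  have hcol : ∀ t, ∑ s, A s t = (L : ℤ) := by
    intro t
    have hsum : ∑ s, A s t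
        = p t + 2 * ∑ s, (min (i t) (i s) : ℤ) := by
      simp only [hA]
      rw [Finset.sum_add_distrib]
      congr 1
      · simp
      · rw [Finset.mul_sum]
        exact Finset.sum_congr rfl fun s _ => by rw [min_comm ((i s : ℤ)) ((i t : ℤ))]
    rw [hsum, hp t]; ring
  -- the product matrix entries
  set C : Matrix (Fin (g+1)) (Fin (g+1)) ℤ := F * (A * E) with hC
  have hAE : ∀ s t, (A * E) s t = A s t + (if t = lst then 0 else -1) * A s lst := by
    intro s t
    have hEeq : ∀ v, E v t = (if v = t then 1 else 0)
        + (if v = lst then (if t = lst then 0 else -1) else 0) := by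
      intro v
      simp only [hE, Matrix.of_apply]
      by_cases h1 : v = t
      · subst h1
        by_cases h2 : v = lst <;> simp [h2]
      · by_cases h2 : v = lst
        · subst h2
          have h3 : ¬ t = lst := fun h => h1 h.symm
          simp [h1, h3]
        · simp [h1, h2]
    rw [Matrix.mul_apply]
    simp only [hEeq, mul_add]
    rw [Finset.sum_add_distrib]
    congr 1
    · simp [Finset.sum_ite_eq', mul_ite]
    · rw [Finset.sum_congr rfl (fun v _ => by
        rw [show A s v * (if v = lst then (if t = lst then 0 else -1) else 0)
          = if v = lst then A s v * (if t = lst then 0 else -1) else 0 by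
            by_cases h : v = lst <;> simp [h]])]
      rw [Finset.sum_ite_eq' Finset.univ lst (fun v => A s v * (if t = lst then 0 else -1))]
      simp [mul_comm]
  have hClst : ∀ t, C lst t = if t = lst then (L : ℤ) else 0 := by
    intro t
    rw [hC, Matrix.mul_apply]
    have : ∀ u, F lst u = 1 := by
      intro u; simp only [hF, Matrix.of_apply]; by_cases h : lst = u <;> simp [h]
    simp only [this, one_mul, hAE]
    rw [Finset.sum_add_distrib, hcol t, ← Finset.mul_sum, hcol lst]
    by_cases h : t = lst <;> simp [h] <;> ring
  have hCrow : ∀ s t, s ≠ lst → C s t = (A * E) s t := by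
    intro s t hs
    rw [hC, Matrix.mul_apply]
    have : ∀ u, F s u = if u = s then 1 else 0 := by
      intro u; simp only [hF, Matrix.of_apply]
      by_cases h : s = u <;> simp [h, hs, eq_comm]
    simp only [this, ite_mul, one_mul, zero_mul]
    rw [Finset.sum_ite_eq' Finset.univ s (fun u => (A * E) u t)]
    simp
  have hC0 : ∀ s t : Fin (g+1), s < t → t ≠ lst → C s t = 0 := by
    intro s t hst ht
    have hs : s ≠ lst := by
      intro h; rw [h] at hst; exact absurd hst (by simp [hlst, not_lt, Fin.le_last])
    rw [hCrow s t hs, hAE, if_neg ht, hA, hA, if_neg hst.ne, if_neg hs,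
      hmin s t hst.le, hmin s lst (Fin.le_last s)]
    ring
  have hCd : ∀ s : Fin (g+1), s ≠ lst → C s s = p s := by
    intro s hs
    rw [hCrow s s hs, hAE, if_neg hs, hA, hA, if_pos rfl, if_neg hs,
      hmin s s le_rfl, hmin s lst (Fin.le_last s)]
    ring
  -- assemble
  have hdetAC : A.det = C.det := by
    rw [hC, Matrix.det_mul, Matrix.det_mul, hdetF, hdetE]; ring
  rw [hdetAC]
  rw [← Matrix.det_submatrix_equiv_self (finSumFinEquiv : Fin g ⊕ Fin 1 ≃ Fin (g+1)) C]
  rw [← Matrix.fromBlocks_toBlocks (C.submatrix finSumFinEquiv finSumFinEquiv)]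
  have hinl : ∀ j : Fin g, (finSumFinEquiv (Sum.inl j) : Fin (g+1)) = j.castSucc := by
    intro j; apply Fin.ext; simp [finSumFinEquiv]
  have hinr : ∀ j : Fin 1, (finSumFinEquiv (Sum.inr j) : Fin (g+1)) = lst := by
    intro j
    apply Fin.ext
    have hj : (j : ℕ) = 0 := by omega
    simp [hlst, hj]
  have hcast_ne : ∀ j : Fin g, (j.castSucc : Fin (g+1)) ≠ lst := by
    intro j h
    have := congrArg Fin.val h
    simp [hlst] at this
    omega
  have h21 : (C.submatrix finSumFinEquiv finSumFinEquiv).toBlocks₂₁ = 0 := by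
    ext a b
    simp only [Matrix.toBlocks₂₁, Matrix.of_apply, Matrix.submatrix_apply, hinl, hinr,
      Matrix.zero_apply]
    rw [hClst, if_neg (hcast_ne b)]
  rw [h21, Matrix.det_fromBlocks_zero₂₁]
  have hdet22 : (C.submatrix finSumFinEquiv finSumFinEquiv).toBlocks₂₂.det = (L : ℤ) := by
    rw [Matrix.det_fin_one]
    simp only [Matrix.toBlocks₂₂, Matrix.of_apply, Matrix.submatrix_apply, hinr]
    rw [hClst, if_pos rfl]
  have hdet11 : (C.submatrix finSumFinEquiv finSumFinEquiv).toBlocks₁₁.det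
      = ∏ s : Fin g, p s.castSucc := by
    have h11tri : (C.submatrix finSumFinEquiv finSumFinEquiv).toBlocks₁₁.BlockTriangular
        OrderDual.toDual := by
      intro a b h
      have hab : a < b := h
      simp only [Matrix.toBlocks₁₁, Matrix.of_apply, Matrix.submatrix_apply, hinl]
      exact hC0 _ _ (by exact_mod_cast Fin.castSucc_lt_castSucc_iff.mpr hab) (hcast_ne b)
    rw [Matrix.det_of_lowerTriangular _ h11tri]
    refine Finset.prod_congr rfl fun s _ => ?_
    simp only [Matrix.toBlocks₁₁, Matrix.of_apply, Matrix.submatrix_apply, hinl]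
    exact hCd _ (hcast_ne s)
  rw [hdet11, hdet22]; ring

/-- `det A = L · p_{i_1} ⋯ p_{i_{g-1}}` (product over all parts but the largest), and
consequently the quotient group `ℤ^g / Aℤ^g` has that cardinality. -/
theorem stmt6 (g : ℕ) (i : Fin (g + 1) → ℕ) (hmono : StrictMono i) (hpos : ∀ s, 0 < i s)
    (L : ℕ) (hL : 2 * ∑ s, i s ≤ L)
    (p : Fin (g + 1) → ℤ)
    (hp : ∀ s, p s = (L : ℤ) - 2 * ∑ t, (min (i s) (i t) : ℤ))
    (hppos : ∀ s, 0 < p s)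
    (A : Matrix (Fin (g + 1)) (Fin (g + 1)) ℤ)
    (hA : ∀ s t, A s t = (if s = t then p s else 0) + 2 * (min (i s) (i t) : ℤ)) :
    A.det = (L : ℤ) * ∏ s : Fin g, p s.castSucc ∧
    (Nat.card ((Fin (g + 1) → ℤ) ⧸ LinearMap.range A.mulVecLin) : ℤ)
      = (L : ℤ) * ∏ s : Fin g, p s.castSucc := by
  have hdet := detPart g i hmono hpos L hL p hp A hA
  have h1 : 0 < ∑ s, i s :=
    Finset.sum_pos (fun s _ => hpos s) ⟨0, Finset.mem_univ 0⟩
  have hLpos : (0 : ℤ) < (L : ℤ) := by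
    have : 0 < L := by omega
    exact_mod_cast this
  have hprodpos : 0 < ∏ s : Fin g, p s.castSucc := Finset.prod_pos fun s _ => hppos _
  have hdpos : 0 < A.det := by rw [hdet]; exact mul_pos hLpos hprodpos
  refine ⟨hdet, ?_⟩
  rw [cardAux A hdpos.ne']
  rw [show ((A.det.natAbs : ℤ)) = A.det from Int.natAbs_of_nonneg hdpos.le, hdet]
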